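/- Let P be a family of probability densities on ℝⁿ, let X₁, X₂ ⊂ ℝⁿ be nonempty closed convex disjoint sets with at least one bounded, let (x¹*, x²*) minimize ‖x¹ − x²‖₂ over X₁ × X₂ and δ = ½‖x¹* − x²*‖₂. Suppose α > 0 and P contains a density q such that ∫_{ℝⁿ} √(q(ξ − e) q(ξ + e)) dξ ≥ exp{−α e·e} for all e with ‖e‖₂ ≤ δ. Let 0 < ε < 1/4 and let T_K be any test which, from K observations ω_k = x + ξ_k (k = 1, …, K) with ξ_k i.i.d. ∼ p ∈ P, decides on H₁ : x ∈ X₁ vs. H₂ : x ∈ X₂ with risk at most ε (i.e., for each χ ∈ {1,2}, sup_{x ∈ X_χ, p ∈ P} Prob{T_K rejects H_χ} ≤ ε). Then K ≥ ln(1/(4ε))/(2αδ²). -/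

import Mathlib

open MeasureTheory Matrix
open scoped Classical
open scoped ENNReal

noncomputable section

/-- `p` is a probability density on `ℝⁿ` (w.r.t. Lebesgue measure). -/
def IsDensity {n : ℕ} (p : (Fin n → ℝ) → ℝ) : Prop :=
  (∀ x, 0 ≤ p x) ∧ (∫ x, p x) = 1

/-- `p` is an even function on `ℝⁿ`. -/
def IsEvenFn {n : ℕ} (p : (Fin n → ℝ) → ℝ) : Prop := ∀ x, p (-x) = p x

/-- `γ` is a probability density on `ℝ`. -/
def IsDensity1 (γ : ℝ → ℝ) : Prop := (∀ s, 0 ≤ γ s) ∧ (∫ s, γ s) = 1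

/-- `γ` is an even probability density on `ℝ`, positive in a neighbourhood of `0`. -/
def IsSpec (γ : ℝ → ℝ) : Prop :=
  IsDensity1 γ ∧ (∀ s, γ (-s) = γ s) ∧ ∃ ε > 0, ∀ s, |s| < ε → 0 < γ s

/-- `P_γ(δ) = ∫_δ^∞ γ(s) ds`. -/
def tailP (γ : ℝ → ℝ) (δ : ℝ) : ℝ := ∫ s in Set.Ici δ, γ s

/-- Membership of the density `p` in the sub-spherical family `P_γ^n`. -/
def SubSpherical {n : ℕ} (γ : ℝ → ℝ) (p : (Fin n → ℝ) → ℝ) : Prop :=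
  IsDensity p ∧ IsEvenFn p ∧
  ∀ e : Fin n → ℝ, e ⬝ᵥ e = 1 → ∀ δ : ℝ, 0 ≤ δ →
    (∫ ξ in {ξ | δ ≤ e ⬝ᵥ ξ}, p ξ) ≤ tailP γ δ

/-- The measure on `ℝⁿ` with density `p` w.r.t. Lebesgue measure. -/
def dMeas {n : ℕ} (p : (Fin n → ℝ) → ℝ) : Measure (Fin n → ℝ) :=
  volume.withDensity fun x => ENNReal.ofReal (p x)

/-- The measure on `ℝ` with density `γ` w.r.t. Lebesgue measure. -/
def dMeas1 (γ : ℝ → ℝ) : Measure ℝ :=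
  volume.withDensity fun s => ENNReal.ofReal (γ s)


section AuxLemmas
open scoped ENNReal

lemma lintegral_pi_prod {α : Type*} [MeasurableSpace α] (μ : Measure α) [SigmaFinite μ]
    {K : ℕ} (f : Fin K → α → ℝ≥0∞) (hf : ∀ i, Measurable (f i)) :
    ∫⁻ x : Fin K → α, ∏ i, f i (x i) ∂(Measure.pi fun _ => μ) = ∏ i, ∫⁻ a, f i a ∂μ := by
  induction K with
  | zero => simp
  | succ m ih =>
    rw [← ((measurePreserving_piFinSuccAbove (fun _ : Fin (m+1) => μ) 0).symm).lintegral_comp_emb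
      (MeasurableEquiv.measurableEmbedding _)]
    have : ∀ p : α × (Fin m → α),
        (∏ i, f i ((MeasurableEquiv.piFinSuccAbove (fun _ : Fin (m+1) => α) 0).symm p i))
          = f 0 p.1 * ∏ i : Fin m, f i.succ (p.2 i) := by
      intro p
      have h0 : ((MeasurableEquiv.piFinSuccAbove (fun _ : Fin (m+1) => α) 0).symm p) 0 = p.1 := by
        simp [MeasurableEquiv.piFinSuccAbove_symm_apply]
      have hs : ∀ i : Fin m,
          ((MeasurableEquiv.piFinSuccAbove (fun _ : Fin (m+1) => α) 0).symm p) i.succ = p.2 i := by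
        intro i
        simp [MeasurableEquiv.piFinSuccAbove_symm_apply, Fin.zero_succAbove]
      rw [Fin.prod_univ_succ, h0]
      exact congrArg _ (Finset.prod_congr rfl fun i _ => by rw [hs i])
    simp_rw [this]
    rw [lintegral_prod_mul (f := f 0) (g := fun y : Fin m → α => ∏ i : Fin m, f i.succ (y i))
      (hf 0).aemeasurable
      (Finset.measurable_prod _ fun i _ => (hf i.succ).comp (measurable_pi_apply i)).aemeasurable]
    rw [ih (fun i => f i.succ) (fun i => hf i.succ), Fin.prod_univ_succ]

lemma pi_withDensity_prod {α : Type*} [MeasurableSpace α] (μ : Measure α) [SigmaFinite μ]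
    {K : ℕ} (f : α → ℝ≥0∞) (hf : Measurable f) (hfin : ∫⁻ a, f a ∂μ ≠ ⊤) :
    Measure.pi (fun _ : Fin K => μ.withDensity f)
      = (Measure.pi fun _ : Fin K => μ).withDensity (fun x => ∏ i, f (x i)) := by
  haveI : IsFiniteMeasure (μ.withDensity f) := isFiniteMeasure_withDensity hfin
  refine Measure.pi_eq fun s hs => ?_
  rw [withDensity_apply _ (MeasurableSet.univ_pi hs),
    ← lintegral_indicator (MeasurableSet.univ_pi hs) _]
  have hind : ∀ x : Fin K → α,
      (Set.univ.pi s).indicator (fun x : Fin K → α => ∏ i, f (x i)) x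
        = ∏ i, (s i).indicator f (x i) := by
    intro x
    by_cases hx : x ∈ Set.univ.pi s
    · rw [Set.indicator_of_mem hx]
      exact Finset.prod_congr rfl fun i _ =>
        (Set.indicator_of_mem (hx i (Set.mem_univ i)) f).symm
    · rw [Set.indicator_of_notMem hx]
      have : ∃ i, x i ∉ s i := by
        by_contra hcon
        push_neg at hcon
        exact hx fun i _ => hcon i
      obtain ⟨i, hi⟩ := this
      exact (Finset.prod_eq_zero (Finset.mem_univ i)
        (Set.indicator_of_notMem hi f)).symm
  simp_rw [hind]
  rw [lintegral_pi_prod μ (fun _ => (s _).indicator f)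
    (fun i => hf.indicator (hs i))]
  exact Finset.prod_congr rfl fun i _ => by
    rw [lintegral_indicator (hs i) _, withDensity_apply _ (hs i)]

lemma map_add_withDensity {n : ℕ} (a : Fin n → ℝ) (g : (Fin n → ℝ) → ℝ≥0∞) :
    Measure.map (fun ξ => a + ξ) (volume.withDensity g)
      = volume.withDensity (fun ω => g (ω - a)) := by
  ext S hS
  have hpre : MeasurableSet ((fun ξ => a + ξ) ⁻¹' S) := hS.preimage (measurable_const_add a)
  rw [Measure.map_apply (measurable_const_add a) hS, withDensity_apply _ hpre,
    withDensity_apply _ hS, ← lintegral_indicator hpre _, ← lintegral_indicator hS _,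
    ← lintegral_add_left_eq_self (fun ω => S.indicator (fun ω => g (ω - a)) ω) a]
  refine lintegral_congr fun ξ => ?_
  by_cases h : a + ξ ∈ S
  · rw [Set.indicator_of_mem h, Set.indicator_of_mem (by exact h), add_sub_cancel_left]
  · rw [Set.indicator_of_notMem h, Set.indicator_of_notMem (by exact h)]

end AuxLemmas

/-- lower bound on the number of observations. If `P` contains a density `q`
with `∫ √(q(ξ−e)q(ξ+e)) dξ ≥ exp(−α e·e)` for `‖e‖₂ ≤ δ`, `0 < ε < 1/4`, and the
measurable `K`-observation test `T` (`true` = accept `H₁`) has both risks at most `ε`,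
then `K ≥ ln(1/(4ε))/(2αδ²)`. -/
theorem statement11 {n K : ℕ}
    (P : Set ((Fin n → ℝ) → ℝ)) (hP : ∀ p ∈ P, IsDensity p)
    (X₁ X₂ : Set (Fin n → ℝ))
    (hne1 : X₁.Nonempty) (hne2 : X₂.Nonempty)
    (hcv1 : Convex ℝ X₁) (hcv2 : Convex ℝ X₂)
    (hcl1 : IsClosed X₁) (hcl2 : IsClosed X₂)
    (hbd : Bornology.IsBounded X₁ ∨ Bornology.IsBounded X₂)
    (hdisj : Disjoint X₁ X₂)
    (x1 x2 : Fin n → ℝ) (hx1 : x1 ∈ X₁) (hx2 : x2 ∈ X₂)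
    (hmin : ∀ y1 ∈ X₁, ∀ y2 ∈ X₂,
      (x1 - x2) ⬝ᵥ (x1 - x2) ≤ (y1 - y2) ⬝ᵥ (y1 - y2))
    (δ : ℝ) (hδ : δ = Real.sqrt ((x1 - x2) ⬝ᵥ (x1 - x2)) / 2)
    (α : ℝ) (hα : 0 < α)
    (q : (Fin n → ℝ) → ℝ) (hqP : q ∈ P)
    (hq : ∀ e : Fin n → ℝ, Real.sqrt (e ⬝ᵥ e) ≤ δ →
      Real.exp (-(α * (e ⬝ᵥ e))) ≤ ∫ ξ, Real.sqrt (q (ξ - e) * q (ξ + e)))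
    (ε : ℝ) (hε0 : 0 < ε) (hε : ε < 1 / 4)
    (T : (Fin K → Fin n → ℝ) → Bool) (hT : Measurable T)
    (hrisk1 : ∀ x ∈ X₁, ∀ p ∈ P,
      (Measure.pi fun _ : Fin K => dMeas p)
        {ξ : Fin K → Fin n → ℝ | T (fun k => x + ξ k) = false} ≤ ENNReal.ofReal ε)
    (hrisk2 : ∀ x ∈ X₂, ∀ p ∈ P,
      (Measure.pi fun _ : Fin K => dMeas p)
        {ξ : Fin K → Fin n → ℝ | T (fun k => x + ξ k) = true} ≤ ENNReal.ofReal ε) :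
    Real.log (1 / (4 * ε)) / (2 * α * δ ^ 2) ≤ (K : ℝ) := by

  classical
  obtain ⟨hq0, hqint⟩ := hP q hqP
  have hQint : Integrable q := by
    by_contra h
    rw [integral_undef h] at hqint; norm_num at hqint
  have hqm : AEMeasurable q (volume : Measure (Fin n → ℝ)) := hQint.aemeasurable
  set q' : (Fin n → ℝ) → ℝ := fun x => max (hqm.mk q x) 0 with hq'def
  have hq'm : Measurable q' := hqm.measurable_mk.max measurable_const
  have hq'0 : ∀ x, 0 ≤ q' x := fun x => le_max_right _ _
  have hqq' : q =ᵐ[(volume : Measure (Fin n → ℝ))] q' := by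
    filter_upwards [hqm.ae_eq_mk] with x hx
    rw [hq'def]
    simp only
    rw [← hx, max_eq_left (hq0 x)]
  -- geometry
  set D : ℝ := (x1 - x2) ⬝ᵥ (x1 - x2) with hD
  have hx12 : x1 ≠ x2 := fun h => (Set.disjoint_left.mp hdisj hx1) (h ▸ hx2)
  have hDsum : D = ∑ i, ((x1 i - x2 i) * (x1 i - x2 i)) := by
    simp only [hD, dotProduct, Pi.sub_apply]
  have hDnn : 0 ≤ D := hDsum ▸ Finset.sum_nonneg fun i _ => mul_self_nonneg _
  have hD0 : 0 < D := by
    rcases hDnn.lt_or_eq with h | h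
    · exact h
    · exfalso
      apply hx12
      funext i
      have h0 := (Finset.sum_eq_zero_iff_of_nonneg
        (fun i _ => mul_self_nonneg (x1 i - x2 i))).mp (by rw [← hDsum, ← h]) i (Finset.mem_univ i)
      have := mul_self_eq_zero.mp h0
      linarith
  have hδ2 : δ ^ 2 = D / 4 := by
    rw [hδ, div_pow, Real.sq_sqrt hDnn]; norm_num
  have hδpos : 0 < δ := by
    have := Real.sqrt_pos.mpr hD0
    rw [hδ]; linarith
  set e : Fin n → ℝ := fun i => (x1 i - x2 i) / 2 with he
  have hee : e ⬝ᵥ e = δ ^ 2 := by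
    rw [hδ2, hDsum]
    simp only [dotProduct, he]
    rw [Finset.sum_div]
    exact Finset.sum_congr rfl fun i _ => by ring
  have hρ := hq e (by rw [hee, Real.sqrt_sq hδpos.le])
  rw [hee] at hρ
  have hρInt : Integrable (fun ξ => Real.sqrt (q (ξ - e) * q (ξ + e))) := by
    by_contra h
    rw [integral_undef h] at hρ
    exact absurd hρ (not_le.mpr (Real.exp_pos _))
  have haeq1 := (measurePreserving_sub_right (volume : Measure (Fin n → ℝ)) e).quasiMeasurePreserving.ae_eq_comp hqq'
  have haeq2 := (measurePreserving_add_right (volume : Measure (Fin n → ℝ)) e).quasiMeasurePreserving.ae_eq_comp hqq'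
  set R : ℝ≥0∞ := ∫⁻ ξ, ENNReal.ofReal (Real.sqrt (q' (ξ - e) * q' (ξ + e))) ∂volume with hRdef
  have hlq : (∫⁻ ξ, ENNReal.ofReal (Real.sqrt (q (ξ - e) * q (ξ + e))) ∂volume) = R := by
    refine lintegral_congr_ae ?_
    filter_upwards [haeq1, haeq2] with ξ h1 h2
    simp only [Function.comp_apply] at h1 h2
    rw [h1, h2]
  have hRe : ENNReal.ofReal (Real.exp (-(α * δ ^ 2))) ≤ R := by
    rw [← hlq, ← ofReal_integral_eq_lintegral_ofReal hρInt
      (Filter.Eventually.of_forall fun ξ => Real.sqrt_nonneg _)]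
    exact ENNReal.ofReal_le_ofReal hρ
  -- densities on ω-space
  set F : (Fin n → ℝ) → ℝ≥0∞ := fun ω => ENNReal.ofReal (q' (ω - x1)) with hF
  set G : (Fin n → ℝ) → ℝ≥0∞ := fun ω => ENNReal.ofReal (q' (ω - x2)) with hG
  set Hd : (Fin n → ℝ) → ℝ≥0∞ :=
    fun ω => ENNReal.ofReal (Real.sqrt (q' (ω - x1) * q' (ω - x2))) with hHd
  have hFm : Measurable F := (hq'm.comp (measurable_id.sub_const x1)).ennreal_ofReal
  have hGm : Measurable G := (hq'm.comp (measurable_id.sub_const x2)).ennreal_ofReal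
  have hHdm : Measurable Hd :=
    (((hq'm.comp (measurable_id.sub_const x1)).mul
      (hq'm.comp (measurable_id.sub_const x2))).sqrt).ennreal_ofReal
  set c : Fin n → ℝ := fun i => (x1 i + x2 i) / 2 with hc
  have hshift : R = ∫⁻ ω, Hd ω ∂volume := by
    rw [← lintegral_add_left_eq_self Hd c]
    refine lintegral_congr fun ξ => ?_
    have h1 : ξ - e = c + ξ - x1 := by
      funext i
      simp only [he, hc, Pi.sub_apply, Pi.add_apply]
      ring
    have h2 : ξ + e = c + ξ - x2 := by
      funext i
      simp only [he, hc, Pi.sub_apply, Pi.add_apply]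
      ring
    show ENNReal.ofReal (Real.sqrt (q' (ξ - e) * q' (ξ + e))) = _
    rw [h1, h2]
  have hHdFG : ∀ ω, Hd ω = (F ω) ^ (1/2 : ℝ) * (G ω) ^ (1/2 : ℝ) := by
    intro ω
    show ENNReal.ofReal (Real.sqrt (q' (ω - x1) * q' (ω - x2)))
      = (ENNReal.ofReal (q' (ω - x1))) ^ (1/2 : ℝ) * (ENNReal.ofReal (q' (ω - x2))) ^ (1/2 : ℝ)
    rw [Real.sqrt_mul (hq'0 _), ENNReal.ofReal_mul (Real.sqrt_nonneg _),
      Real.sqrt_eq_rpow, Real.sqrt_eq_rpow,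
      ENNReal.ofReal_rpow_of_nonneg (hq'0 _) (by norm_num),
      ENNReal.ofReal_rpow_of_nonneg (hq'0 _) (by norm_num)]
  -- measures
  set μq : Measure (Fin n → ℝ) := volume.withDensity (fun x => ENNReal.ofReal (q' x)) with hμq
  have hdq : dMeas q = μq :=
    withDensity_congr_ae (by filter_upwards [hqq'] with x hx; rw [hx])
  have hQ'int : Integrable q' := hQint.congr hqq'
  have hq'integral : (∫ x, q' x) = 1 := by rw [← integral_congr_ae hqq', hqint]
  have hq'lint : (∫⁻ x, ENNReal.ofReal (q' x) ∂volume) = 1 := by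
    rw [← ofReal_integral_eq_lintegral_ofReal hQ'int
      (Filter.Eventually.of_forall hq'0), hq'integral, ENNReal.ofReal_one]
  set μ1 : Measure (Fin n → ℝ) := volume.withDensity F with hμ1
  set μ2 : Measure (Fin n → ℝ) := volume.withDensity G with hμ2
  have mp1 : MeasurePreserving (fun ξ => x1 + ξ) μq μ1 :=
    ⟨measurable_const_add x1, map_add_withDensity x1 _⟩
  have mp2 : MeasurePreserving (fun ξ => x2 + ξ) μq μ2 :=
    ⟨measurable_const_add x2, map_add_withDensity x2 _⟩
  haveI hμqP : IsProbabilityMeasure μq := ⟨by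
    rw [hμq, withDensity_apply _ MeasurableSet.univ, Measure.restrict_univ, hq'lint]⟩
  haveI hμ1P : IsProbabilityMeasure μ1 := ⟨by
    rw [← mp1.map_eq, Measure.map_apply mp1.measurable MeasurableSet.univ,
      Set.preimage_univ]
    exact measure_univ⟩
  haveI hμ2P : IsProbabilityMeasure μ2 := ⟨by
    rw [← mp2.map_eq, Measure.map_apply mp2.measurable MeasurableSet.univ,
      Set.preimage_univ]
    exact measure_univ⟩
  set Pi1 : Measure (Fin K → Fin n → ℝ) := Measure.pi (fun _ => μ1) with hPi1def
  set Pi2 : Measure (Fin K → Fin n → ℝ) := Measure.pi (fun _ => μ2) with hPi2def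
  set Piv : Measure (Fin K → Fin n → ℝ) :=
    Measure.pi (fun _ => (volume : Measure (Fin n → ℝ))) with hPiv
  have hFlint : (∫⁻ ω, F ω ∂volume) = 1 := by
    have : (∫⁻ ω, F ω ∂volume) = μ1 Set.univ := by
      rw [hμ1, withDensity_apply _ MeasurableSet.univ, Measure.restrict_univ]
    rw [this]; exact measure_univ
  have hGlint : (∫⁻ ω, G ω ∂volume) = 1 := by
    have : (∫⁻ ω, G ω ∂volume) = μ2 Set.univ := by
      rw [hμ2, withDensity_apply _ MeasurableSet.univ, Measure.restrict_univ]
    rw [this]; exact measure_univ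
  have hPi1d : Pi1 = Piv.withDensity (fun ω => ∏ k, F (ω k)) :=
    pi_withDensity_prod volume F hFm (by rw [hFlint]; exact ENNReal.one_ne_top)
  have hPi2d : Pi2 = Piv.withDensity (fun ω => ∏ k, G (ω k)) :=
    pi_withDensity_prod volume G hGm (by rw [hGlint]; exact ENNReal.one_ne_top)
  haveI : IsProbabilityMeasure Pi1 := by rw [hPi1def]; infer_instance
  haveI : IsProbabilityMeasure Pi2 := by rw [hPi2def]; infer_instance
  set A : Set (Fin K → Fin n → ℝ) := {ω | T ω = false} with hA
  have hAm : MeasurableSet A := hT (measurableSet_singleton false)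
  have mpK1 : MeasurePreserving (fun (ξ : Fin K → Fin n → ℝ) (k : Fin K) => x1 + ξ k)
      (Measure.pi fun _ => μq) Pi1 := measurePreserving_pi _ _ fun _ => mp1
  have mpK2 : MeasurePreserving (fun (ξ : Fin K → Fin n → ℝ) (k : Fin K) => x2 + ξ k)
      (Measure.pi fun _ => μq) Pi2 := measurePreserving_pi _ _ fun _ => mp2
  have hpiq : (Measure.pi fun _ : Fin K => μq) = Measure.pi fun _ : Fin K => dMeas q := by
    rw [hdq]
  have hrisk1' : Pi1 A ≤ ENNReal.ofReal ε := by
    rw [← mpK1.map_eq, Measure.map_apply mpK1.measurable hAm]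
    have hpre : (fun (ξ : Fin K → Fin n → ℝ) (k : Fin K) => x1 + ξ k) ⁻¹' A
        = {ξ : Fin K → Fin n → ℝ | T (fun k => x1 + ξ k) = false} := rfl
    rw [hpre, hpiq]
    exact hrisk1 x1 hx1 q hqP
  have hAc : Aᶜ = {ω : Fin K → Fin n → ℝ | T ω = true} := by
    ext ω
    simp [hA]
  have hrisk2' : Pi2 Aᶜ ≤ ENNReal.ofReal ε := by
    rw [← mpK2.map_eq, Measure.map_apply mpK2.measurable hAm.compl, hAc]
    have hpre : (fun (ξ : Fin K → Fin n → ℝ) (k : Fin K) => x2 + ξ k) ⁻¹'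
        {ω : Fin K → Fin n → ℝ | T ω = true}
        = {ξ : Fin K → Fin n → ℝ | T (fun k => x2 + ξ k) = true} := rfl
    rw [hpre, hpiq]
    exact hrisk2 x2 hx2 q hqP
  -- Hoelder on a set
  have hkey : ∀ S : Set (Fin K → Fin n → ℝ), MeasurableSet S →
      (∫⁻ ω in S, ∏ k, Hd (ω k) ∂Piv) ≤ (Pi1 S) ^ (1/2 : ℝ) * (Pi2 S) ^ (1/2 : ℝ) := by
    intro S hS
    have hfm : Measurable (fun ω : Fin K → Fin n → ℝ => ∏ k, (F (ω k)) ^ (1/2 : ℝ)) :=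
      Finset.measurable_prod _ fun k _ =>
        (hFm.comp (measurable_pi_apply k)).pow_const _
    have hgm : Measurable (fun ω : Fin K → Fin n → ℝ => ∏ k, (G (ω k)) ^ (1/2 : ℝ)) :=
      Finset.measurable_prod _ fun k _ =>
        (hGm.comp (measurable_pi_apply k)).pow_const _
    have hpt : ∀ ω : Fin K → Fin n → ℝ, (∏ k, Hd (ω k))
        = ((fun ω : Fin K → Fin n → ℝ => ∏ k, (F (ω k)) ^ (1/2 : ℝ)) *
           (fun ω : Fin K → Fin n → ℝ => ∏ k, (G (ω k)) ^ (1/2 : ℝ))) ω := by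
      intro ω
      show _ = (∏ k, (F (ω k)) ^ (1/2 : ℝ)) * ∏ k, (G (ω k)) ^ (1/2 : ℝ)
      rw [← Finset.prod_mul_distrib]
      exact Finset.prod_congr rfl fun k _ => hHdFG (ω k)
    have hsq : ∀ (h : (Fin n → ℝ) → ℝ≥0∞) (ω : Fin K → Fin n → ℝ),
        (∏ k, (h (ω k)) ^ (1/2 : ℝ)) ^ (2 : ℝ) = ∏ k, h (ω k) := by
      intro h ω
      rw [ENNReal.prod_rpow_of_nonneg (by norm_num : (0:ℝ) ≤ 1/2), ← ENNReal.rpow_mul]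
      norm_num
    calc (∫⁻ ω in S, ∏ k, Hd (ω k) ∂Piv)
        = ∫⁻ ω in S, ((fun ω : Fin K → Fin n → ℝ => ∏ k, (F (ω k)) ^ (1/2 : ℝ)) *
           (fun ω : Fin K → Fin n → ℝ => ∏ k, (G (ω k)) ^ (1/2 : ℝ))) ω ∂Piv :=
          lintegral_congr fun ω => hpt ω
      _ ≤ (∫⁻ ω in S, (∏ k, (F (ω k)) ^ (1/2 : ℝ)) ^ (2:ℝ) ∂Piv) ^ (1/(2:ℝ)) *
          (∫⁻ ω in S, (∏ k, (G (ω k)) ^ (1/2 : ℝ)) ^ (2:ℝ) ∂Piv) ^ (1/(2:ℝ)) :=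
          ENNReal.lintegral_mul_le_Lp_mul_Lq _
            Real.HolderConjugate.two_two
            hfm.aemeasurable hgm.aemeasurable
      _ = (Pi1 S) ^ (1/2 : ℝ) * (Pi2 S) ^ (1/2 : ℝ) := by
          congr 1
          · congr 1
            rw [lintegral_congr fun ω => hsq F ω, hPi1d, withDensity_apply _ hS]
          · congr 1
            rw [lintegral_congr fun ω => hsq G ω, hPi2d, withDensity_apply _ hS]
  have hR2 : (∫⁻ ω, ∏ k, Hd (ω k) ∂Piv) = R ^ K := by
    rw [hPiv, lintegral_pi_prod volume (fun _ => Hd) (fun _ => hHdm),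
      Finset.prod_const, Finset.card_univ, Fintype.card_fin, ← hshift]
  have hfinal : (ENNReal.ofReal (Real.exp (-(α * δ ^ 2)))) ^ K
      ≤ 2 * (ENNReal.ofReal ε) ^ (1/2 : ℝ) := by
    calc (ENNReal.ofReal (Real.exp (-(α * δ ^ 2)))) ^ K ≤ R ^ K :=
          pow_le_pow_left' hRe K
      _ = ∫⁻ ω, ∏ k, Hd (ω k) ∂Piv := hR2.symm
      _ = (∫⁻ ω in A, ∏ k, Hd (ω k) ∂Piv) + ∫⁻ ω in Aᶜ, ∏ k, Hd (ω k) ∂Piv :=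
          (lintegral_add_compl _ hAm).symm
      _ ≤ (Pi1 A) ^ (1/2 : ℝ) * (Pi2 A) ^ (1/2 : ℝ)
          + (Pi1 Aᶜ) ^ (1/2 : ℝ) * (Pi2 Aᶜ) ^ (1/2 : ℝ) :=
          add_le_add (hkey A hAm) (hkey Aᶜ hAm.compl)
      _ ≤ (ENNReal.ofReal ε) ^ (1/2 : ℝ) * (1:ℝ≥0∞) ^ (1/2 : ℝ)
          + (1:ℝ≥0∞) ^ (1/2 : ℝ) * (ENNReal.ofReal ε) ^ (1/2 : ℝ) := by
          refine add_le_add (mul_le_mul' ?_ ?_) (mul_le_mul' ?_ ?_)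
          · exact ENNReal.rpow_le_rpow hrisk1' (by norm_num)
          · exact ENNReal.rpow_le_rpow prob_le_one (by norm_num)
          · exact ENNReal.rpow_le_rpow prob_le_one (by norm_num)
          · exact ENNReal.rpow_le_rpow hrisk2' (by norm_num)
      _ = 2 * (ENNReal.ofReal ε) ^ (1/2 : ℝ) := by
          rw [ENNReal.one_rpow, mul_one, one_mul, two_mul]
  have hrealineq : Real.exp (-(α * δ ^ 2)) ^ K ≤ 2 * ε ^ (1/2 : ℝ) := by
    have h1 : ENNReal.ofReal (Real.exp (-(α * δ ^ 2)) ^ K)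
        ≤ ENNReal.ofReal (2 * ε ^ (1/2 : ℝ)) := by
      rw [ENNReal.ofReal_pow (Real.exp_pos _).le,
        ENNReal.ofReal_mul (by norm_num : (0:ℝ) ≤ 2), ENNReal.ofReal_ofNat,
        ← ENNReal.ofReal_rpow_of_nonneg hε0.le (by norm_num)]
      exact hfinal
    exact (ENNReal.ofReal_le_ofReal_iff (by positivity)).mp h1
  -- arithmetic
  have hlhs : Real.log (Real.exp (-(α * δ ^ 2)) ^ K) = (K : ℝ) * (-(α * δ ^ 2)) := by
    rw [Real.log_pow, Real.log_exp]
  have hrhs : Real.log (2 * ε ^ (1/2 : ℝ)) = Real.log 2 + (1/2) * Real.log ε := by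
    rw [Real.log_mul two_ne_zero (by positivity), Real.log_rpow hε0]
  have hle := Real.log_le_log (by positivity) hrealineq
  rw [hlhs, hrhs] at hle
  rw [div_le_iff₀ (by positivity : (0:ℝ) < 2 * α * δ ^ 2)]
  have hlog4 : Real.log (1 / (4 * ε)) = -(Real.log 4 + Real.log ε) := by
    rw [one_div, Real.log_inv, Real.log_mul (by norm_num) hε0.ne']
  have h42 : Real.log 4 = 2 * Real.log 2 := by
    rw [show (4:ℝ) = 2 ^ 2 by norm_num, Real.log_pow]
    push_cast; ring
  rw [hlog4, h42]
  nlinarith [hle]
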